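/- Let G = (V,E) be an undirected connected unweighted graph, S ⊆ V nonempty, v ∈ V\S with dist(S,v) = 1, and let B_S be the BFS DAG rooted at S with D_v the vertices reachable from v in B_S. Then for every x ∉ D_v, dist(S,x) = dist(S∪{v}, x); i.e., adding v changes the distance only of vertices in D_v. -/
import Mathlib


open SimpleGraph Finset

/-- Distance from a group `S` to a vertex `x` in an unweighted graph. -/
noncomputable def setDist {V : Type*} (G : SimpleGraph V) (S : Finset V) (x : V) : ℕ :=
  sInf {d | ∃ s ∈ S, G.dist s x = d}

/-- Farness of a group `S`. -/
noncomputable def farness {V : Type*} [Fintype V] [DecidableEq V]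
    (G : SimpleGraph V) (S : Finset V) : ℕ :=
  ∑ x ∈ Sᶜ, setDist G S x

/-- Edge relation of the BFS DAG rooted at `S`. -/
def bfsEdge {V : Type*} (G : SimpleGraph V) (S : Finset V) (x y : V) : Prop :=
  G.Adj x y ∧ setDist G S y = setDist G S x + 1

/-- Vertices reachable from `v` in the BFS DAG rooted at `S` (including `v`). -/
def reach {V : Type*} (G : SimpleGraph V) (S : Finset V) (v : V) : Set V :=
  {x | Relation.ReflTransGen (bfsEdge G S) v x}

lemma setDist_exists {V : Type*} (G : SimpleGraph V) (S : Finset V) (hS : S.Nonempty) (x : V) :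
    ∃ s ∈ S, G.dist s x = setDist G S x := by
  obtain ⟨s, hs⟩ := hS
  have : {d | ∃ s ∈ S, G.dist s x = d}.Nonempty := ⟨G.dist s x, s, hs, rfl⟩
  exact Nat.sInf_mem this

lemma setDist_le {V : Type*} (G : SimpleGraph V) (S : Finset V) {s : V} (hs : s ∈ S) (x : V) :
    setDist G S x ≤ G.dist s x :=
  Nat.sInf_le ⟨s, hs, rfl⟩

lemma setDist_triangle {V : Type*} {G : SimpleGraph V} (hconn : G.Connected)
    (S : Finset V) (hS : S.Nonempty) (x y : V) :
    setDist G S y ≤ setDist G S x + G.dist x y := by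
  obtain ⟨s, hsS, hs⟩ := setDist_exists G S hS x
  calc setDist G S y ≤ G.dist s y := setDist_le G S hsS y
    _ ≤ G.dist s x + G.dist x y := hconn.dist_triangle
    _ = setDist G S x + G.dist x y := by rw [hs]

lemma reach_of_dist {V : Type*} {G : SimpleGraph V} (hconn : G.Connected)
    (S : Finset V) (hS : S.Nonempty) (v : V) :
    ∀ n : ℕ, ∀ w x : V, w ∈ reach G S v → G.dist w x = n →
      setDist G S x = setDist G S w + n → x ∈ reach G S v := by
  intro n
  induction n with
  | zero =>
    intro w x hw hd _
    rwa [(hconn.dist_eq_zero_iff).mp hd] at hw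
  | succ n ih =>
    intro w x hw hd hsd
    obtain ⟨p, hp⟩ := hconn.exists_walk_length_eq_dist w x
    rw [hd] at hp
    cases p with
    | nil => simp at hp
    | cons h q =>
      rename_i y
      simp only [SimpleGraph.Walk.length_cons, Nat.succ_inj] at hp
      have hyx : G.dist y x = n := by
        have h1 : G.dist y x ≤ n := hp ▸ SimpleGraph.dist_le q
        have h2 : n + 1 ≤ 1 + G.dist y x := by
          calc n + 1 = G.dist w x := hd.symm
            _ ≤ G.dist w y + G.dist y x := hconn.dist_triangle
            _ ≤ 1 + G.dist y x := by
                have := SimpleGraph.dist_le (SimpleGraph.Walk.cons h SimpleGraph.Walk.nil)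
                simpa using Nat.add_le_add_right (by simpa using this) (G.dist y x)
        omega
      have hy1 : setDist G S y ≤ setDist G S w + 1 := by
        have := setDist_triangle hconn S hS w y
        have hwy : G.dist w y ≤ 1 := by
          have := SimpleGraph.dist_le (SimpleGraph.Walk.cons h SimpleGraph.Walk.nil)
          simpa using this
        omega
      have hy2 : setDist G S x ≤ setDist G S y + n := by
        have := setDist_triangle hconn S hS y x
        omega
      have hy : setDist G S y = setDist G S w + 1 := by omega
      have hwy : w ∈ reach G S v → y ∈ reach G S v := fun hw =>
        Relation.ReflTransGen.tail hw ⟨h, hy⟩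
      exact ih y x (hwy hw) hyx (by omega)

theorem stmt8 {V : Type*} [Fintype V] [DecidableEq V] (G : SimpleGraph V)
    (hconn : G.Connected) (S : Finset V) (hS : S.Nonempty)
    (v : V) (hv : v ∉ S) (hdist : setDist G S v = 1) :
    ∀ x : V, x ∉ reach G S v → setDist G S x = setDist G (insert v S) x := by
  intro x hx
  have hSsub : setDist G (insert v S) x ≤ setDist G S x := by
    obtain ⟨s, hsS, hs⟩ := setDist_exists G S hS x
    calc setDist G (insert v S) x ≤ G.dist s x := setDist_le G _ (mem_insert_of_mem hsS) x
      _ = setDist G S x := hs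
  rcases eq_or_lt_of_le hSsub with he | hlt
  · exact he.symm
  exfalso
  obtain ⟨s, hsS, hs⟩ := setDist_exists G (insert v S) ⟨v, mem_insert_self v S⟩ x
  rcases mem_insert.mp hsS with rfl | hsS'
  · -- achieved by v
    have hle : setDist G S x ≤ 1 + G.dist s x := by
      have := setDist_triangle hconn S hS s x
      omega
    have hgt : G.dist s x < setDist G S x := hs ▸ hlt
    have heq : setDist G S x = setDist G S s + G.dist s x := by
      rw [hdist]; omega
    exact hx (reach_of_dist hconn S hS s (G.dist s x) s x
      Relation.ReflTransGen.refl rfl heq)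
  · have : setDist G S x ≤ setDist G (insert v S) x := hs ▸ setDist_le G S hsS' x
    omega
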